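/- arXiv:2101.00277 — 5 statements merged into one kernel-verified Lean document; each statement's English description precedes it below -/
import Mathlib

section
/- Let Φ be an irreducible positive recurrent DTMC with π^T|g| < ∞. Then for any states i, j, the expected absolute additive functional E_i[Σ_{k=0}^{τ_j−1} |g(Φ_k)|] is finite; in particular the solution f_j(i) of Poisson's equation given by the first-return-time representation is finite for all i. -/
open MeasureTheory Filter Topology

/-- First return time to state `j` along a discrete path (junk value `0` if no return). -/
noncomputable def hitTime (j : ℕ) (ω : ℕ → ℕ) : ℕ := sInf {k | 1 ≤ k ∧ ω k = j}

/-- Additive functional `ζ_j(g)(ω) = ∑_{k=0}^{τ_j-1} g(ω_k)`. -/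
noncomputable def addF (g : ℕ → ℝ) (j : ℕ) (ω : ℕ → ℕ) : ℝ :=
  ∑ k ∈ Finset.range (hitTime j ω), g (ω k)

/-- Matrix powers of a transition kernel on `ℕ`. -/
noncomputable def matPow (P : ℕ → ℕ → ℝ) : ℕ → ℕ → ℕ → ℝ
  | 0 => fun i k => if i = k then 1 else 0
  | n + 1 => fun i k => ∑' m, matPow P n i m * P m k

def MCStochastic (P : ℕ → ℕ → ℝ) : Prop :=
  (∀ i k, 0 ≤ P i k) ∧ ∀ i, HasSum (P i) 1

def MCIrreducible (P : ℕ → ℕ → ℝ) : Prop := ∀ i k, ∃ n, 0 < matPow P n i k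

/-- `μ i` is the law on path space of the Markov chain with kernel `P` started at `i`. -/
def MCChainLaw (P : ℕ → ℕ → ℝ) (μ : ℕ → Measure (ℕ → ℕ)) : Prop :=
  (∀ i, IsProbabilityMeasure (μ i)) ∧
  ∀ i n (s : ℕ → ℕ), s 0 = i →
    μ i {ω | ∀ k ≤ n, ω k = s k} =
      ENNReal.ofReal (∏ k ∈ Finset.range n, P (s k) (s (k + 1)))

/-- Sure return to every state, with finite mean return times. -/
def MCPositiveRecurrent (μ : ℕ → Measure (ℕ → ℕ)) : Prop :=
  ∀ i j, μ i {ω | ∃ k, 1 ≤ k ∧ ω k = j} = 1 ∧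
    Integrable (fun ω => (hitTime j ω : ℝ)) (μ j)

/-- `π` is an invariant probability vector for `P`. -/
def MCInvariant (P : ℕ → ℕ → ℝ) (π : ℕ → ℝ) : Prop :=
  (∀ i, 0 ≤ π i) ∧ HasSum π 1 ∧ ∀ k, HasSum (fun i => π i * P i k) (π k)
open MeasureTheory Filter Topology ENNReal

noncomputable def EP (P : ℕ → ℕ → ℝ) (x y : ℕ) : ℝ≥0∞ := ENNReal.ofReal (P x y)

noncomputable def Qt (P : ℕ → ℕ → ℝ) (j : ℕ) : ℕ → ℕ → ℕ → ℝ≥0∞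
  | 0 => fun i m => if i = m then 1 else 0
  | k+1 => fun i m => if m = j then 0 else ∑' x, Qt P j k i x * EP P x m

section basic
variable {P : ℕ → ℕ → ℝ} {j : ℕ}

lemma Qt_zero {i m : ℕ} : Qt P j 0 i m = if i = m then 1 else 0 := rfl
lemma Qt_succ {k i m : ℕ} :
    Qt P j (k+1) i m = if m = j then 0 else ∑' x, Qt P j k i x * EP P x m := rfl

lemma EP_sum (hP : MCStochastic P) (x : ℕ) : ∑' y, EP P x y = 1 := by
  have h := (hP.2 x)
  have : ∑' y, EP P x y = ENNReal.ofReal (∑' y, P x y) :=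
    (ENNReal.ofReal_tsum_of_nonneg (hP.1 x) h.summable).symm
  rw [this, h.tsum_eq]; simp

lemma Qt_sum_le_one (hP : MCStochastic P) (i : ℕ) : ∀ k, ∑' m, Qt P j k i m ≤ 1
  | 0 => by
      have : ∑' m, Qt P j 0 i m = 1 := by
        simp only [Qt_zero]
        rw [tsum_eq_single i (fun b hb => if_neg fun h => hb h.symm)]
        simp
      exact this.le
  | k+1 => by
      calc ∑' m, Qt P j (k+1) i m ≤ ∑' m, ∑' x, Qt P j k i x * EP P x m := by
            refine ENNReal.tsum_le_tsum fun m => ?_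
            rw [Qt_succ]; split <;> simp
        _ = ∑' x, Qt P j k i x * ∑' m, EP P x m := by
            rw [ENNReal.tsum_comm]; exact tsum_congr fun x => ENNReal.tsum_mul_left
        _ ≤ 1 := by
            simp only [EP_sum hP, mul_one]; exact Qt_sum_le_one hP i k

end basic

section pipos
variable {P : ℕ → ℕ → ℝ} {π : ℕ → ℝ}

lemma matPow_nonneg (hP : MCStochastic P) : ∀ n i k, 0 ≤ matPow P n i k
  | 0 => fun i k => by simp only [matPow]; positivity
  | n+1 => fun i k => by
      simp only [matPow]
      exact tsum_nonneg fun m => mul_nonneg (matPow_nonneg hP n i m) (hP.1 m k)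

lemma pi_ge (hP : MCStochastic P) (hinv : MCInvariant P π) (i0 : ℕ) (h0 : 0 ≤ π i0) :
    ∀ n k, π i0 * matPow P n i0 k ≤ π k
  | 0 => fun k => by
      simp only [matPow]
      split
      · next h => subst h; simp
      · simpa using hinv.1 k
  | n+1 => fun k => by
      have hsum := hinv.2.2 k
      have hge : ∀ m, π i0 * matPow P n i0 m * P m k ≤ π m * P m k := fun m =>
        mul_le_mul_of_nonneg_right (pi_ge hP hinv i0 h0 n m) (hP.1 m k)
      have hnn : ∀ m, 0 ≤ π i0 * matPow P n i0 m * P m k := fun m =>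
        mul_nonneg (mul_nonneg h0 (matPow_nonneg hP n i0 m)) (hP.1 m k)
      have hs : Summable fun m => π i0 * matPow P n i0 m * P m k :=
        Summable.of_nonneg_of_le hnn hge hsum.summable
      calc π i0 * matPow P n.succ i0 k
          = ∑' m, π i0 * matPow P n i0 m * P m k := by
            show π i0 * ∑' m, matPow P n i0 m * P m k = _
            rw [← tsum_mul_left]; exact tsum_congr fun m => (mul_assoc _ _ _).symm
        _ ≤ ∑' m, π m * P m k := Summable.tsum_le_tsum hge hs hsum.summable
        _ = π k := hsum.tsum_eq

lemma pi_pos (hP : MCStochastic P) (hirr : MCIrreducible P) (hinv : MCInvariant P π)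
    (k : ℕ) : 0 < π k := by
  obtain ⟨i0, hi0⟩ : ∃ i0, 0 < π i0 := by
    by_contra h
    push_neg at h
    have hz : ∀ i, π i = 0 := fun i => le_antisymm (h i) (hinv.1 i)
    have h1 := hinv.2.1.tsum_eq
    rw [funext hz] at h1
    simp at h1
  obtain ⟨n, hn⟩ := hirr i0 k
  exact lt_of_lt_of_le (mul_pos hi0 hn) (pi_ge hP hinv i0 hi0.le n k)

section kac
variable {P : ℕ → ℕ → ℝ} {π : ℕ → ℝ} {j : ℕ}

lemma pE_invariant (hP : MCStochastic P) (hinv : MCInvariant P π) (m : ℕ) :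
    ∑' x, ENNReal.ofReal (π x) * EP P x m = ENNReal.ofReal (π m) := by
  have h := hinv.2.2 m
  have h1 : ∑' x, ENNReal.ofReal (π x) * EP P x m = ∑' x, ENNReal.ofReal (π x * P x m) :=
    tsum_congr fun x => (ENNReal.ofReal_mul (hinv.1 x)).symm
  rw [h1, ← ENNReal.ofReal_tsum_of_nonneg (fun x => mul_nonneg (hinv.1 x) (hP.1 x m))
    h.summable, h.tsum_eq]

lemma kac (hP : MCStochastic P) (hinv : MCInvariant P π) :
    ∀ N m, ENNReal.ofReal (π j) * ∑ k ∈ Finset.range N, Qt P j k j m ≤ ENNReal.ofReal (π m)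
  | 0, m => by simp
  | N+1, m => by
    by_cases hm : m = j
    · rw [hm]
      have hT : ∑ k ∈ Finset.range (N+1), Qt P j k j j = 1 := by
        rw [Finset.sum_range_succ']
        have hz : ∀ k, Qt P j (k+1) j j = 0 := fun k => by rw [Qt_succ]; simp
        simp [hz, Qt_zero]
      rw [hT, mul_one]
    · have h0 : Qt P j 0 j m = 0 := by
        rw [Qt_zero, if_neg (fun h => hm h.symm)]
      calc ENNReal.ofReal (π j) * ∑ k ∈ Finset.range (N+1), Qt P j k j m
          = ENNReal.ofReal (π j) * ∑ k ∈ Finset.range N, ∑' x, Qt P j k j x * EP P x m := by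
            rw [Finset.sum_range_succ', h0, add_zero]
            congr 1
            exact Finset.sum_congr rfl fun k _ => by rw [Qt_succ, if_neg hm]
        _ = ∑' x, (ENNReal.ofReal (π j) * ∑ k ∈ Finset.range N, Qt P j k j x) * EP P x m := by
            rw [← Summable.tsum_finsetSum (fun k _ => ENNReal.summable), ← ENNReal.tsum_mul_left]
            exact tsum_congr fun x => by rw [mul_assoc, Finset.sum_mul]
        _ ≤ ∑' x, ENNReal.ofReal (π x) * EP P x m :=
            ENNReal.tsum_le_tsum fun x => mul_le_mul_left (kac hP hinv N x) _
        _ = ENNReal.ofReal (π m) := pE_invariant hP hinv m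

lemma tsum_Qt_le (hP : MCStochastic P) (hinv : MCInvariant P π) (hj : 0 < π j) (m : ℕ) :
    ∑' k, Qt P j k j m ≤ ENNReal.ofReal (π m) / ENNReal.ofReal (π j) := by
  have hj0 : ENNReal.ofReal (π j) ≠ 0 := (ENNReal.ofReal_pos.2 hj).ne'
  rw [ENNReal.tsum_eq_iSup_sum]
  refine iSup_le fun s => ?_
  have hs : s ⊆ Finset.range (s.sup id + 1) := fun x hx =>
    Finset.mem_range.2 (Nat.lt_succ_of_le (Finset.le_sup (f := id) hx))
  calc ∑ k ∈ s, Qt P j k j m ≤ ∑ k ∈ Finset.range (s.sup id + 1), Qt P j k j m :=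
        Finset.sum_le_sum_of_subset hs
    _ ≤ ENNReal.ofReal (π m) / ENNReal.ofReal (π j) := by
        rw [ENNReal.le_div_iff_mul_le (Or.inl hj0) (Or.inl ENNReal.ofReal_ne_top)]
        rw [mul_comm]
        exact kac hP hinv _ m

lemma Qt_exists_pos (hP : MCStochastic P) :
    ∀ n i, 0 < matPow P n j i → ∃ r, 0 < Qt P j r j i
  | 0, i => fun h => by
      simp only [matPow] at h
      split at h
      · next hji => exact ⟨0, by rw [Qt_zero, if_pos hji]; norm_num⟩
      · exact absurd h (lt_irrefl 0)
  | n+1, i => fun h => by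
      obtain ⟨m, hm⟩ : ∃ m, matPow P n j m * P m i ≠ 0 := by
        by_contra hc
        push_neg at hc
        simp only [matPow, funext hc, tsum_zero] at h
        exact absurd h (lt_irrefl 0)
      have h1 : 0 < matPow P n j m :=
        lt_of_le_of_ne (matPow_nonneg hP n j m) (fun h' => hm (by rw [← h', zero_mul]))
      have h2 : 0 < P m i :=
        lt_of_le_of_ne (hP.1 m i) (fun h' => hm (by rw [← h', mul_zero]))
      obtain ⟨r, hr⟩ := Qt_exists_pos hP n m h1
      by_cases hij : i = j
      · exact ⟨0, by rw [Qt_zero, if_pos hij.symm]; norm_num⟩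
      · refine ⟨r+1, ?_⟩
        rw [Qt_succ, if_neg hij]
        have hpos : 0 < Qt P j r j m * EP P m i :=
          ENNReal.mul_pos hr.ne' (ENNReal.ofReal_pos.2 h2).ne'
        exact lt_of_lt_of_le hpos (ENNReal.le_tsum m)

lemma Qt_shift {r i : ℕ} :
    ∀ k m, Qt P j r j i * Qt P j k i m ≤ Qt P j (r+k) j m
  | 0, m => by
      rw [Qt_zero]
      by_cases h : i = m
      · subst h; simp
      · simp [h]
  | k+1, m => by
      show Qt P j r j i * Qt P j (k+1) i m ≤ Qt P j ((r+k)+1) j m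
      rw [Qt_succ, Qt_succ]
      split
      · simp
      · rw [← ENNReal.tsum_mul_left]
        refine ENNReal.tsum_le_tsum fun x => ?_
        rw [← mul_assoc]
        exact mul_le_mul_left (Qt_shift k x) _

end kac

section sfin
variable {P : ℕ → ℕ → ℝ} {π : ℕ → ℝ} {j : ℕ}

lemma S_lt_top (hP : MCStochastic P) (hirr : MCIrreducible P) (hinv : MCInvariant P π)
    (G : ℕ → ℝ≥0∞) (hG : ∑' m, ENNReal.ofReal (π m) * G m ≠ ⊤) (i : ℕ) :
    ∑' (k : ℕ), ∑' m, G m * Qt P j k i m < ⊤ := by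
  have hj : 0 < π j := pi_pos hP hirr hinv j
  obtain ⟨r, hr⟩ := Qt_exists_pos hP (hirr j i).choose i (hirr j i).choose_spec
  set c := Qt P j r j i with hc
  have hc1 : c ≤ 1 := le_trans (ENNReal.le_tsum i) (Qt_sum_le_one hP j r)
  have hSj : ∑' (k : ℕ), ∑' m, G m * Qt P j k j m ≠ ⊤ := by
    have heq : ∑' (k : ℕ), ∑' m, G m * Qt P j k j m
        = ∑' m, G m * ∑' (k : ℕ), Qt P j k j m := by
      rw [ENNReal.tsum_comm]; exact tsum_congr fun m => ENNReal.tsum_mul_left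
    rw [heq]
    have hle : ∑' m, G m * ∑' (k : ℕ), Qt P j k j m
        ≤ ∑' m, (ENNReal.ofReal (π m) * G m) * (ENNReal.ofReal (π j))⁻¹ := by
      refine ENNReal.tsum_le_tsum fun m => ?_
      calc G m * ∑' (k : ℕ), Qt P j k j m
          ≤ G m * (ENNReal.ofReal (π m) / ENNReal.ofReal (π j)) :=
            mul_le_mul_right (tsum_Qt_le hP hinv hj m) _
        _ = (ENNReal.ofReal (π m) * G m) * (ENNReal.ofReal (π j))⁻¹ := by
            rw [div_eq_mul_inv]; ring
    refine ne_top_of_le_ne_top ?_ hle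
    rw [ENNReal.tsum_mul_right]
    exact ENNReal.mul_ne_top hG (ENNReal.inv_ne_top.2 (ENNReal.ofReal_pos.2 hj).ne')
  have key : c * ∑' (k : ℕ), ∑' m, G m * Qt P j k i m
      ≤ ∑' (k : ℕ), ∑' m, G m * Qt P j k j m := by
    rw [← ENNReal.tsum_mul_left]
    calc ∑' (k : ℕ), c * ∑' m, G m * Qt P j k i m
        ≤ ∑' (k : ℕ), ∑' m, G m * Qt P j (r+k) j m := by
          refine ENNReal.tsum_le_tsum fun k => ?_
          rw [← ENNReal.tsum_mul_left]
          refine ENNReal.tsum_le_tsum fun m => ?_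
          calc c * (G m * Qt P j k i m) = G m * (c * Qt P j k i m) := by ring
            _ ≤ G m * Qt P j (r+k) j m := mul_le_mul_right (Qt_shift k m) _
      _ ≤ ∑' (k : ℕ), ∑' m, G m * Qt P j k j m :=
          Summable.tsum_le_tsum_of_inj (fun k => r+k) (fun a b h => add_left_cancel h)
            (fun c _ => zero_le) (fun k => le_refl _) ENNReal.summable ENNReal.summable
  have hcne : c ≠ 0 := hr.ne'
  have hct : c ≠ ⊤ := (lt_of_le_of_lt hc1 ENNReal.one_lt_top).ne
  calc ∑' (k : ℕ), ∑' m, G m * Qt P j k i m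
      = c⁻¹ * (c * ∑' (k : ℕ), ∑' m, G m * Qt P j k i m) := by
        rw [← mul_assoc, ENNReal.inv_mul_cancel hcne hct, one_mul]
    _ ≤ c⁻¹ * ∑' (k : ℕ), ∑' m, G m * Qt P j k j m := mul_le_mul_right key _
    _ < ⊤ := ENNReal.mul_lt_top (ENNReal.inv_ne_top.2 hcne).lt_top hSj.lt_top

end sfin

section comb
variable {P : ℕ → ℕ → ℝ}

open scoped Classical in
/-- weight of an admissible path prefix -/
noncomputable def WA (P : ℕ → ℕ → ℝ) (j i m : ℕ) (k : ℕ) (v : Fin (k+1) → ℕ) : ℝ≥0∞ :=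
  if (∀ l : Fin (k+1), 1 ≤ (l : ℕ) → v l ≠ j) ∧ v (Fin.last k) = m ∧ v 0 = i then
    ∏ t : Fin k, EP P (v t.castSucc) (v t.succ)
  else 0

lemma WA_tsum (j i m : ℕ) :
    ∀ k, ∑' v : Fin (k+1) → ℕ, WA P j i m k v = Qt P j k i m
  | 0 => by
    rw [Qt_zero]
    rw [← Equiv.tsum_eq (Equiv.funUnique (Fin 1) ℕ).symm (WA P j i m 0)]
    have hval : ∀ x : ℕ, WA P j i m 0 ((Equiv.funUnique (Fin 1) ℕ).symm x)
        = if x = m ∧ x = i then 1 else 0 := by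
      intro x
      simp only [WA, Equiv.funUnique_symm_apply, Function.const_apply]
      by_cases h : x = m ∧ x = i
      · rw [if_pos ⟨fun l hl => absurd hl (by have := Nat.lt_one_iff.1 l.isLt; omega),
          h.1, h.2⟩, if_pos h]
        simp
      · rw [if_neg (fun hc => h ⟨hc.2.1, hc.2.2⟩), if_neg h]
    rw [tsum_congr hval]
    rw [tsum_eq_single m (fun b hb => by rw [if_neg (fun h => hb h.1)])]
    by_cases h : i = m
    · rw [if_pos ⟨rfl, h.symm⟩, if_pos h]
    · rw [if_neg (fun hh => h hh.2.symm), if_neg h]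
  | k+1 => by
    rw [Qt_succ]
    rw [← Equiv.tsum_eq (Fin.snocEquiv (fun _ => ℕ)) (WA P j i m (k+1))]
    rw [ENNReal.tsum_prod']
    have hWA0 : ∀ (y : ℕ) (u : Fin (k+1) → ℕ), u (Fin.last k) ≠ y → WA P j i y k u = 0 := by
      intro y u hne
      simp only [WA]
      exact if_neg (fun hc => hne hc.2.1)
    have hval : ∀ (x : ℕ) (u : Fin (k+1) → ℕ),
        WA P j i m (k+1) ((Fin.snocEquiv (fun _ => ℕ)) (x, u))
          = if x = m then (if m = j then 0 else
              WA P j i (u (Fin.last k)) k u * EP P (u (Fin.last k)) m) else 0 := by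
      intro x u
      set w : Fin (k+2) → ℕ := Fin.snoc u x with hw
      have hsnoc : ((Fin.snocEquiv (fun _ => ℕ)) (x, u) : Fin (k+2) → ℕ) = w := rfl
      rw [hsnoc]
      have hzero : (0 : Fin (k+2)) = Fin.castSucc 0 := rfl
      have hwc : ∀ t : Fin (k+1), w t.castSucc = u t := fun t => by
        rw [hw]; exact Fin.snoc_castSucc ..
      have hwl : w (Fin.last (k+1)) = x := by rw [hw]; exact Fin.snoc_last ..
      have hw0 : w 0 = u 0 := hwc 0
      have hcond : ((∀ l : Fin (k+2), 1 ≤ (l : ℕ) → w l ≠ j) ∧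
            w (Fin.last (k+1)) = m ∧ w 0 = i)
          ↔ ((∀ l : Fin (k+1), 1 ≤ (l : ℕ) → u l ≠ j) ∧ x ≠ j ∧ x = m ∧ u 0 = i) := by
        constructor
        · rintro ⟨h1, h2, h3⟩
          refine ⟨fun l hl => ?_, ?_, ?_, ?_⟩
          · have := h1 l.castSucc (by simpa using hl)
            rwa [hwc] at this
          · have := h1 (Fin.last (k+1)) (by simp)
            rwa [hwl] at this
          · rwa [hwl] at h2
          · rwa [hzero, hwc] at h3
        · rintro ⟨h1, h2, h3, h4⟩
          refine ⟨fun l hl => ?_, by rw [hwl]; exact h3,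
            by rw [hzero, hwc]; exact h4⟩
          rcases Fin.eq_castSucc_or_eq_last l with ⟨l', rfl⟩ | rfl
          · rw [hwc]
            exact h1 l' (by simpa using hl)
          · rw [hwl]; exact h2
      have hprod : ∏ t : Fin (k+1), EP P (w t.castSucc) (w t.succ)
          = (∏ t : Fin k, EP P (u t.castSucc) (u t.succ)) * EP P (u (Fin.last k)) x := by
        rw [Fin.prod_univ_castSucc]
        congr 1
        · refine Finset.prod_congr rfl fun t _ => ?_
          rw [hwc, Fin.succ_castSucc, hwc]
        · rw [hwc, Fin.succ_last, hwl]
      by_cases hc : (∀ l : Fin (k+1), 1 ≤ (l : ℕ) → u l ≠ j) ∧ x ≠ j ∧ x = m ∧ u 0 = i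
      · simp only [WA]
        rw [if_pos (hcond.mpr hc), if_pos hc.2.2.1, if_neg (hc.2.2.1 ▸ hc.2.1),
          if_pos ⟨hc.1, trivial, hc.2.2.2⟩, hprod, hc.2.2.1]
      · simp only [WA]
        rw [if_neg (fun hh => hc (hcond.mp hh))]
        by_cases hxm : x = m
        · rw [if_pos hxm]
          by_cases hmj : m = j
          · rw [if_pos hmj]
          · rw [if_neg hmj]
            rcases Classical.em ((∀ l : Fin (k+1), 1 ≤ (l : ℕ) → u l ≠ j) ∧ u 0 = i) with h | h
            · exact absurd ⟨h.1, hxm ▸ hmj, hxm, h.2⟩ hc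
            · rw [if_neg (fun hh => h ⟨hh.1, hh.2.2⟩), zero_mul]
        · rw [if_neg hxm]
    rw [tsum_congr (fun x => tsum_congr (fun u => hval x u))]
    rw [tsum_eq_single m (fun x hx => by
      rw [tsum_congr (fun u => if_neg hx), tsum_zero])]
    rw [tsum_congr (fun u => if_pos rfl)]
    by_cases hmj : m = j
    · rw [if_pos hmj, tsum_congr (fun u => if_pos hmj), tsum_zero]
    · rw [if_neg hmj, tsum_congr (fun u => if_neg hmj)]
      have hstep : ∀ u : Fin (k+1) → ℕ,
          WA P j i (u (Fin.last k)) k u * EP P (u (Fin.last k)) m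
            = ∑' y, (if u (Fin.last k) = y then WA P j i y k u * EP P y m else 0) := by
        intro u
        rw [tsum_eq_single (u (Fin.last k)) (fun y hy => if_neg (Ne.symm hy))]
        rw [if_pos rfl]
      rw [tsum_congr hstep, ENNReal.tsum_comm]
      refine tsum_congr fun y => ?_
      have : ∀ u : Fin (k+1) → ℕ,
          (if u (Fin.last k) = y then WA P j i y k u * EP P y m else 0)
            = WA P j i y k u * EP P y m := by
        intro u
        by_cases h : u (Fin.last k) = y
        · rw [if_pos h]
        · rw [if_neg h, hWA0 y u h, zero_mul]
      rw [tsum_congr this, ENNReal.tsum_mul_right, WA_tsum j i y k]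

end comb

section meas
variable {P : ℕ → ℕ → ℝ} {μ : ℕ → Measure (ℕ → ℕ)}

def projF (k : ℕ) (ω : ℕ → ℕ) : Fin (k+1) → ℕ := fun t => ω t

lemma measurable_projF (k : ℕ) : Measurable (projF k) :=
  measurable_pi_lambda _ fun t => measurable_pi_apply _

lemma ofReal_prod_range {f : ℕ → ℝ} (hf : ∀ t, 0 ≤ f t) (k : ℕ) :
    ENNReal.ofReal (∏ t ∈ Finset.range k, f t) = ∏ t ∈ Finset.range k, ENNReal.ofReal (f t) := by
  induction k with
  | zero => simp
  | succ k ih =>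
      rw [Finset.prod_range_succ, Finset.prod_range_succ,
        ENNReal.ofReal_mul (Finset.prod_nonneg fun t _ => hf t), ih]

lemma measure_omega0 (hchain : MCChainLaw P μ) (i : ℕ) : μ i {ω | ω 0 = i} = 1 := by
  have h := hchain.2 i 0 (fun _ => i) rfl
  have hset : {ω : ℕ → ℕ | ∀ k ≤ 0, ω k = (fun _ => i) k} = {ω : ℕ → ℕ | ω 0 = i} := by
    ext ω; simp [Nat.le_zero]
  rw [hset] at h
  simpa using h

lemma cyl_measure (hP : MCStochastic P) (hchain : MCChainLaw P μ) (i k : ℕ)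
    (v : Fin (k+1) → ℕ) :
    μ i (projF k ⁻¹' {v})
      = (if v 0 = i then 1 else 0) * ∏ t : Fin k, EP P (v t.castSucc) (v t.succ) := by
  by_cases hv : v 0 = i
  · rw [if_pos hv, one_mul]
    set s : ℕ → ℕ := fun t => if h : t ≤ k then v ⟨t, Nat.lt_succ_of_le h⟩ else 0 with hs
    have hsv : ∀ t (h : t ≤ k), s t = v ⟨t, Nat.lt_succ_of_le h⟩ := by
      intro t h; rw [hs]; exact dif_pos h
    have hs0 : s 0 = i := by rw [hsv 0 (Nat.zero_le k)]; exact hv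
    have hEq : projF k ⁻¹' {v} = {ω | ∀ t ≤ k, ω t = s t} := by
      ext ω
      simp only [Set.mem_preimage, Set.mem_singleton_iff, Set.mem_setOf_eq, funext_iff]
      constructor
      · intro h t ht
        rw [hsv t ht]
        exact h ⟨t, Nat.lt_succ_of_le ht⟩
      · intro h l
        have := h l.1 (Nat.lt_succ_iff.1 l.2)
        rw [hsv l.1 (Nat.lt_succ_iff.1 l.2)] at this
        convert this using 2
        rfl
    rw [hEq, hchain.2 i k s hs0, ofReal_prod_range (fun t => hP.1 _ _) k,
      ← Fin.prod_univ_eq_prod_range (fun t => ENNReal.ofReal (P (s t) (s (t+1)))) k]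
    refine Finset.prod_congr rfl fun t _ => ?_
    have h1 : s t.1 = v t.castSucc := by
      rw [hsv t.1 (Nat.le_of_lt_succ (Nat.lt_succ_of_lt t.2))]
      congr 1
    have h2 : s (t.1+1) = v t.succ := by
      rw [hsv (t.1+1) t.2]
      congr 1
    rw [EP, h1, h2]
  · rw [if_neg hv, zero_mul]
    refine measure_mono_null (t := {ω : ℕ → ℕ | ω 0 = i}ᶜ) (fun ω hω => ?_) ?_
    · have hωv : projF k ω = v := hω
      intro h0
      exact hv (by rw [← hωv]; exact h0)
    · have hmeas : MeasurableSet ((fun ω : ℕ → ℕ => ω 0) ⁻¹' {i}) :=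
        (measurable_pi_apply 0) (measurableSet_singleton i)
      have := hchain.1 i
      show μ i ((fun ω : ℕ → ℕ => ω 0) ⁻¹' {i})ᶜ = 0
      rw [prob_compl_eq_zero_iff hmeas]
      exact measure_omega0 hchain i

lemma measure_E (hP : MCStochastic P) (hchain : MCChainLaw P μ) (j i m k : ℕ) :
    μ i {ω | (∀ l, 1 ≤ l → l ≤ k → ω l ≠ j) ∧ ω k = m} = Qt P j k i m := by
  rw [← WA_tsum j i m k]
  classical
  set S : Set (Fin (k+1) → ℕ) :=
    {v | (∀ l : Fin (k+1), 1 ≤ (l : ℕ) → v l ≠ j) ∧ v (Fin.last k) = m} with hS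
  have hE : {ω : ℕ → ℕ | (∀ l, 1 ≤ l → l ≤ k → ω l ≠ j) ∧ ω k = m} = projF k ⁻¹' S := by
    ext ω
    simp only [Set.mem_setOf_eq, Set.mem_preimage, hS]
    constructor
    · rintro ⟨h1, h2⟩
      exact ⟨fun l hl => h1 l.1 hl (Nat.lt_succ_iff.1 l.2), h2⟩
    · rintro ⟨h1, h2⟩
      exact ⟨fun l hl hlk => h1 ⟨l, Nat.lt_succ_of_le hlk⟩ hl, h2⟩
  have hU : projF k ⁻¹' S = ⋃ (v : S), projF k ⁻¹' {(v : Fin (k+1) → ℕ)} := by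
    ext ω
    simp only [Set.mem_preimage, Set.mem_iUnion, Set.mem_singleton_iff]
    constructor
    · intro h; exact ⟨⟨projF k ω, h⟩, rfl⟩
    · rintro ⟨v, hv⟩; rw [hv]; exact v.2
  rw [hE, hU, measure_iUnion ?_ ?_]
  · have hterm : ∀ v : S, μ i (projF k ⁻¹' {(v : Fin (k+1) → ℕ)}) = WA P j i m k v := by
      rintro ⟨v, hv⟩
      rw [cyl_measure hP hchain i k v]
      simp only [WA]
      by_cases h0 : v 0 = i
      · rw [if_pos h0, one_mul, if_pos ⟨hv.1, hv.2, h0⟩]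
      · rw [if_neg h0, zero_mul, if_neg (fun hc => h0 hc.2.2)]
    rw [tsum_congr hterm]
    rw [tsum_subtype S (WA P j i m k)]
    refine tsum_congr fun v => ?_
    by_cases hv : v ∈ S
    · rw [Set.indicator_of_mem hv]
    · rw [Set.indicator_of_notMem hv]
      simp only [WA]
      exact (if_neg (fun hc => hv ⟨hc.1, hc.2.1⟩)).symm
  · intro a b hab
    refine Disjoint.preimage _ ?_
    simp only [Set.disjoint_singleton_left, Set.mem_singleton_iff]
    exact fun h => hab (Subtype.coe_injective h)
  · exact fun v => (measurable_projF k) (measurableSet_singleton _)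

end meas

section hit
variable {P : ℕ → ℕ → ℝ} {μ : ℕ → Measure (ℕ → ℕ)}

lemma hitTime_gt_iff (j k : ℕ) (ω : ℕ → ℕ) :
    k < hitTime j ω ↔ (∃ l, 1 ≤ l ∧ ω l = j) ∧ ∀ l, 1 ≤ l → l ≤ k → ω l ≠ j := by
  constructor
  · intro h
    have hne : {l | 1 ≤ l ∧ ω l = j}.Nonempty := by
      by_contra hne
      rw [Set.not_nonempty_iff_eq_empty] at hne
      rw [hitTime, hne, Nat.sInf_empty] at h
      omega
    refine ⟨hne, fun l h1 hlk hlj => ?_⟩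
    have : hitTime j ω ≤ l := Nat.sInf_le ⟨h1, hlj⟩
    omega
  · rintro ⟨hne, hav⟩
    have hmem := Nat.sInf_mem hne
    by_contra hk
    push_neg at hk
    exact hav _ hmem.1 (le_trans (Nat.sInf_le hmem) hk) hmem.2

lemma measurable_hitTime (j : ℕ) : Measurable (hitTime j) := by
  apply measurable_to_countable'
  intro n
  have hchar : hitTime j ⁻¹' {n} =
      ({ω : ℕ → ℕ | 1 ≤ n ∧ ω n = j} ∩ ⋂ m, ⋂ (_ : m < n), {ω : ℕ → ℕ | 1 ≤ m ∧ ω m = j}ᶜ)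
        ∪ ({ω : ℕ → ℕ | n = 0} ∩ ⋂ m, {ω : ℕ → ℕ | 1 ≤ m ∧ ω m = j}ᶜ) := by
    ext ω
    simp only [Set.mem_preimage, Set.mem_singleton_iff, Set.mem_union, Set.mem_inter_iff,
      Set.mem_iInter, Set.mem_setOf_eq, Set.mem_compl_iff]
    constructor
    · intro h
      rcases Set.eq_empty_or_nonempty {l | 1 ≤ l ∧ ω l = j} with he | hne
      · right
        have h0 : hitTime j ω = 0 := by rw [hitTime, he, Nat.sInf_empty]
        refine ⟨by omega, fun m hm => ?_⟩
        have : m ∈ {l | 1 ≤ l ∧ ω l = j} := hm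
        rw [he] at this
        exact this
      · left
        have hmem := Nat.sInf_mem hne
        rw [← hitTime] at hmem
        rw [h] at hmem
        refine ⟨hmem, fun m hm hmem' => ?_⟩
        have : hitTime j ω ≤ m := Nat.sInf_le hmem'
        omega
    · rintro (⟨h1, h2⟩ | ⟨h1, h2⟩)
      · have hne : {l | 1 ≤ l ∧ ω l = j}.Nonempty := ⟨n, h1⟩
        refine le_antisymm (Nat.sInf_le h1) ?_
        have hmem : hitTime j ω ∈ {l | 1 ≤ l ∧ ω l = j} := Nat.sInf_mem hne
        by_contra hlt
        push_neg at hlt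
        exact h2 _ hlt hmem
      · have he : {l | 1 ≤ l ∧ ω l = j} = ∅ := by
          ext l; simp only [Set.mem_setOf_eq, Set.mem_empty_iff_false, iff_false]
          exact h2 l
        rw [hitTime, he, Nat.sInf_empty]
        omega
  rw [hchar]
  have hm1 : ∀ m : ℕ, MeasurableSet {ω : ℕ → ℕ | 1 ≤ m ∧ ω m = j} := by
    intro m
    have : {ω : ℕ → ℕ | 1 ≤ m ∧ ω m = j}
        = {ω : ℕ → ℕ | 1 ≤ m} ∩ ((fun ω : ℕ → ℕ => ω m) ⁻¹' {j}) := rfl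
    rw [this]
    exact (MeasurableSet.const _).inter ((measurable_pi_apply m) (measurableSet_singleton j))
  refine MeasurableSet.union ?_ ?_
  · exact (hm1 n).inter (MeasurableSet.iInter fun m => MeasurableSet.iInter fun _ => (hm1 m).compl)
  · exact (MeasurableSet.const _).inter (MeasurableSet.iInter fun m => (hm1 m).compl)

lemma measurable_retSet (j : ℕ) : MeasurableSet {ω : ℕ → ℕ | ∃ k, 1 ≤ k ∧ ω k = j} := by
  have : {ω : ℕ → ℕ | ∃ k, 1 ≤ k ∧ ω k = j} = {ω : ℕ → ℕ | 0 < hitTime j ω} := by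
    ext ω
    rw [Set.mem_setOf_eq, Set.mem_setOf_eq, hitTime_gt_iff j 0 ω]
    constructor
    · intro h; exact ⟨h, fun l h1 h0 => absurd (le_trans h1 h0) (by omega)⟩
    · rintro ⟨h, -⟩; exact h
  rw [this]
  exact (measurable_hitTime j) trivial

lemma measure_D (hP : MCStochastic P) (hchain : MCChainLaw P μ)
    (hret : ∀ i j, μ i {ω | ∃ k, 1 ≤ k ∧ ω k = j} = 1) (i j k m : ℕ) :
    μ i {ω | k < hitTime j ω ∧ ω k = m} = Qt P j k i m := by
  have hD : {ω : ℕ → ℕ | k < hitTime j ω ∧ ω k = m}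
      = {ω : ℕ → ℕ | (∀ l, 1 ≤ l → l ≤ k → ω l ≠ j) ∧ ω k = m}
        ∩ {ω : ℕ → ℕ | ∃ l, 1 ≤ l ∧ ω l = j} := by
    ext ω
    simp only [Set.mem_setOf_eq, Set.mem_inter_iff, hitTime_gt_iff j k ω]
    tauto
  rw [hD, measure_inter_conull ?_, measure_E hP hchain j i m k]
  have := hchain.1 i
  rw [prob_compl_eq_zero_iff (measurable_retSet j)]
  exact hret i j

lemma measurableSet_D (j k m : ℕ) :
    MeasurableSet {ω : ℕ → ℕ | k < hitTime j ω ∧ ω k = m} := by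
  have : {ω : ℕ → ℕ | k < hitTime j ω ∧ ω k = m}
      = (hitTime j ⁻¹' {n | k < n}) ∩ ((fun ω : ℕ → ℕ => ω k) ⁻¹' {m}) := rfl
  rw [this]
  exact ((measurable_hitTime j) trivial).inter ((measurable_pi_apply k) (measurableSet_singleton m))

lemma lintegral_addF (hP : MCStochastic P) (hchain : MCChainLaw P μ)
    (hret : ∀ i j, μ i {ω | ∃ k, 1 ≤ k ∧ ω k = j} = 1) (G : ℕ → ℝ≥0∞) (i j : ℕ) :
    ∫⁻ ω, (∑ k ∈ Finset.range (hitTime j ω), G (ω k)) ∂ μ i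
      = ∑' (k : ℕ), ∑' (m : ℕ), G m * Qt P j k i m := by
  have hpt : ∀ ω, (∑ k ∈ Finset.range (hitTime j ω), G (ω k))
      = ∑' (k : ℕ), ∑' (m : ℕ),
          Set.indicator {ω' : ℕ → ℕ | k < hitTime j ω' ∧ ω' k = m} (fun _ => G m) ω := by
    intro ω
    have hin : ∀ k, ∑' (m : ℕ),
        Set.indicator {ω' : ℕ → ℕ | k < hitTime j ω' ∧ ω' k = m} (fun _ => G m) ω
          = if k < hitTime j ω then G (ω k) else 0 := by
      intro k
      rw [tsum_eq_single (ω k) (fun m hm =>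
        Set.indicator_of_notMem (show ω ∉ {ω' : ℕ → ℕ | k < hitTime j ω' ∧ ω' k = m} from
          fun hmem => hm hmem.2.symm) _)]
      by_cases h : k < hitTime j ω
      · rw [Set.indicator_of_mem
          (show ω ∈ {ω' : ℕ → ℕ | k < hitTime j ω' ∧ ω' k = ω k} from ⟨h, rfl⟩), if_pos h]
      · rw [Set.indicator_of_notMem
          (show ω ∉ {ω' : ℕ → ℕ | k < hitTime j ω' ∧ ω' k = ω k} from
            fun hmem => h hmem.1), if_neg h]
    rw [tsum_congr hin]
    rw [tsum_eq_sum (s := Finset.range (hitTime j ω))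
      (fun k hk => if_neg (fun hlt => hk (Finset.mem_range.2 hlt)))]
    exact (Finset.sum_congr rfl fun k hk => if_pos (Finset.mem_range.1 hk)).symm
  rw [lintegral_congr hpt]
  rw [lintegral_tsum (fun k => (Measurable.ennreal_tsum (fun m =>
    measurable_const.indicator (measurableSet_D j k m))).aemeasurable)]
  refine tsum_congr fun k => ?_
  rw [lintegral_tsum (fun m =>
    (measurable_const.indicator (measurableSet_D j k m)).aemeasurable)]
  refine tsum_congr fun m => ?_
  rw [lintegral_indicator_const (measurableSet_D j k m)]
  rw [measure_D hP hchain hret i j k m]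

end hit


/-- For an irreducible positive recurrent DTMC with `π^T|g| < ∞`,
the expected absolute additive functional `E_i[∑_{k=0}^{τ_j-1} |g(Φ_k)|]` is finite for
all states `i, j`; in particular the first-return-time representation of the solution of
Poisson's equation is (integrable, hence) finite for all `i`. -/
theorem additive_functional_finite
    (P : ℕ → ℕ → ℝ) (μ : ℕ → Measure (ℕ → ℕ)) (π g : ℕ → ℝ)
    (hP : MCStochastic P) (hirr : MCIrreducible P) (hchain : MCChainLaw P μ)
    (hrec : MCPositiveRecurrent μ) (hinv : MCInvariant P π)
    (hg : Summable fun i => π i * |g i|) :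
    (∀ i j, (∫⁻ ω, ENNReal.ofReal (addF (fun x => |g x|) j ω) ∂ μ i) < ⊤) ∧
    (∀ i j, Integrable (fun ω => addF (fun x => g x - ∑' m, π m * g m) j ω) (μ i)) := by
  have hret : ∀ i j, μ i {ω | ∃ k, 1 ≤ k ∧ ω k = j} = 1 := fun i j => (hrec i j).1
  set c : ℝ := ∑' m, π m * g m with hc
  constructor
  · intro i j
    set G : ℕ → ℝ≥0∞ := fun m => ENNReal.ofReal |g m| with hG
    have hpt : ∀ ω, ENNReal.ofReal (addF (fun x => |g x|) j ω)
        = ∑ k ∈ Finset.range (hitTime j ω), G (ω k) := by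
      intro ω
      rw [addF, ENNReal.ofReal_sum_of_nonneg (fun k _ => abs_nonneg _)]
    rw [lintegral_congr hpt, lintegral_addF hP hchain hret G i j]
    refine S_lt_top hP hirr hinv G ?_ i
    have : ∑' m, ENNReal.ofReal (π m) * G m = ENNReal.ofReal (∑' m, π m * |g m|) := by
      rw [ENNReal.ofReal_tsum_of_nonneg (fun m => mul_nonneg (hinv.1 m) (abs_nonneg _)) hg]
      exact tsum_congr fun m => (ENNReal.ofReal_mul (hinv.1 m)).symm
    rw [this]
    exact ENNReal.ofReal_ne_top
  · intro i j
    set h : ℕ → ℝ := fun x => g x - c with hh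
    have hmeas : Measurable (fun ω => addF h j ω) := by
      have hF : Measurable (fun p : (ℕ → ℕ) × ℕ => ∑ k ∈ Finset.range p.2, h (p.1 k)) := by
        refine measurable_from_prod_countable_left fun n => ?_
        refine Finset.measurable_sum (Finset.range n) (fun k _ => ?_)
        exact show Measurable fun x : ℕ → ℕ => h (x k) from
          (measurable_from_top (f := h)).comp (measurable_pi_apply k)
      exact hF.comp (measurable_id.prodMk (measurable_hitTime j))
    refine ⟨hmeas.aestronglyMeasurable, ?_⟩
    rw [hasFiniteIntegral_iff_norm]
    set G' : ℕ → ℝ≥0∞ := fun m => ENNReal.ofReal (|g m| + |c|) with hG'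
    have hbd : ∀ ω, ENNReal.ofReal ‖addF h j ω‖
        ≤ ∑ k ∈ Finset.range (hitTime j ω), G' (ω k) := by
      intro ω
      rw [Real.norm_eq_abs]
      calc ENNReal.ofReal |addF h j ω|
          ≤ ENNReal.ofReal (∑ k ∈ Finset.range (hitTime j ω), (|g (ω k)| + |c|)) := by
            refine ENNReal.ofReal_le_ofReal ?_
            refine le_trans (Finset.abs_sum_le_sum_abs _ _) ?_
            exact Finset.sum_le_sum fun k _ => abs_sub (g (ω k)) c
        _ = ∑ k ∈ Finset.range (hitTime j ω), G' (ω k) :=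
            ENNReal.ofReal_sum_of_nonneg fun k _ =>
              add_nonneg (abs_nonneg _) (abs_nonneg _)
    refine lt_of_le_of_lt (lintegral_mono hbd) ?_
    rw [lintegral_addF hP hchain hret G' i j]
    refine S_lt_top hP hirr hinv G' ?_ i
    have hsum : Summable (fun m => π m * (|g m| + |c|)) := by
      have : (fun m => π m * (|g m| + |c|)) = fun m => π m * |g m| + π m * |c| := by
        funext m; ring
      rw [this]
      exact hg.add (hinv.2.1.summable.mul_right |c|)
    have : ∑' m, ENNReal.ofReal (π m) * G' m
        = ENNReal.ofReal (∑' m, π m * (|g m| + |c|)) := by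
      rw [ENNReal.ofReal_tsum_of_nonneg
        (fun m => mul_nonneg (hinv.1 m) (add_nonneg (abs_nonneg _) (abs_nonneg _))) hsum]
      exact tsum_congr fun m => (ENNReal.ofReal_mul (hinv.1 m)).symm
    rw [this]
    exact ENNReal.ofReal_ne_top
end pipos
end

section
/- For the censored Markov chain on {0,…,n} obtained from an irreducible recurrent DTMC Φ, for every initial state i and every fixed state j ≤ n, the first return times are monotone in n along each sample path: _{(n)}τ_j(ω) ≤ _{(n+1)}τ_j(ω) ≤ τ_j(ω), and _{(n)}τ_j(ω) ↑ τ_j(ω) < ∞ almost surely as n → ∞. -/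
open MeasureTheory Filter Topology

/-- The censored (watched) path on `{0,…,n}`: the original path observed only at the
successive times it visits `{0,…,n}`. -/
noncomputable def censor (n : ℕ) (ω : ℕ → ℕ) : ℕ → ℕ :=
  fun k => ω (Nat.nth (fun m => ω m ≤ n) k)

lemma count_mono_pred {p q : ℕ → Prop} [DecidablePred p] [DecidablePred q]
    (h : ∀ m, p m → q m) (t : ℕ) : Nat.count p t ≤ Nat.count q t := by
  rw [Nat.count_eq_card_filter_range, Nat.count_eq_card_filter_range]
  exact Finset.card_le_card (Finset.monotone_filter_right _ (fun m _ => h m))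

lemma hitTime_censor_eq {ω : ℕ → ℕ} {i j n : ℕ} (h0 : ω 0 = i) (hin : i ≤ n) (hjn : j ≤ n)
    (hτ1 : 1 ≤ hitTime j ω) (hτj : ω (hitTime j ω) = j) :
    hitTime j (censor n ω) = Nat.count (fun m => ω m ≤ n) (hitTime j ω) := by
  classical
  set τ := hitTime j ω with hτdef
  set p : ℕ → Prop := fun m => ω m ≤ n with hpdef
  have hp0 : p 0 := by simp [hpdef, h0, hin]
  have hpτ : p τ := by simp [hpdef, hτj, hjn]
  have hc1 : 1 ≤ Nat.count p τ := by
    have h1 : Nat.count p 1 = 1 := by simp [Nat.count_succ, hp0]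
    calc 1 = Nat.count p 1 := h1.symm
    _ ≤ Nat.count p τ := Nat.count_monotone p hτ1
  have hmem : Nat.count p τ ∈ {k | 1 ≤ k ∧ censor n ω k = j} := by
    refine ⟨hc1, ?_⟩
    show ω (Nat.nth p (Nat.count p τ)) = j
    rw [Nat.nth_count hpτ, hτj]
  have hlb : ∀ k ∈ {k | 1 ≤ k ∧ censor n ω k = j}, Nat.count p τ ≤ k := by
    rintro k ⟨hk1, hkj⟩
    by_contra hlt
    push_neg at hlt
    have hcard : ∀ hf : (setOf p).Finite, k < hf.toFinset.card :=
      fun hf => lt_of_lt_of_le hlt (Nat.count_le_card hf τ)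
    have h1 : Nat.nth p k < τ := Nat.nth_lt_of_lt_count hlt
    have h3 : 1 ≤ Nat.nth p k := by
      have := Nat.nth_lt_nth' (lt_of_lt_of_le Nat.zero_lt_one hk1) hcard
      omega
    have hkj' : ω (Nat.nth p k) = j := hkj
    have : τ ≤ Nat.nth p k := Nat.sInf_le ⟨h3, hkj'⟩
    omega
  have hne : {k | 1 ≤ k ∧ censor n ω k = j}.Nonempty := ⟨_, hmem⟩
  refine le_antisymm (Nat.sInf_le hmem) (hlb _ (Nat.sInf_mem hne))

/-- For the censored chain of an irreducible recurrent DTMC, the first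
return times to `j` are monotone in `n` along almost every sample path,
`_{(n)}τ_j(ω) ≤ _{(n+1)}τ_j(ω) ≤ τ_j(ω)`, and `_{(n)}τ_j(ω) ↑ τ_j(ω) < ∞` a.s. -/
theorem censored_return_times_monotone
    (P : ℕ → ℕ → ℝ) (μ : ℕ → Measure (ℕ → ℕ)) (j : ℕ)
    (hP : MCStochastic P) (hirr : MCIrreducible P) (hchain : MCChainLaw P μ)
    (hrec : ∀ i j', μ i {ω | ∃ k, 1 ≤ k ∧ ω k = j'} = 1) :
    ∀ i, ∀ᵐ ω ∂ μ i,
      (∀ n, max i j ≤ n →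
        hitTime j (censor n ω) ≤ hitTime j (censor (n + 1) ω) ∧
        hitTime j (censor (n + 1) ω) ≤ hitTime j ω) ∧
      Tendsto (fun n => hitTime j (censor n ω)) atTop (𝓝 (hitTime j ω)) ∧
      (∃ k, 1 ≤ k ∧ ω k = j) := by
  classical
  intro i
  obtain ⟨hprob, hlaw⟩ := hchain
  haveI := hprob i
  -- a.e. ω 0 = i
  have h0meas : MeasurableSet {ω : ℕ → ℕ | ω 0 = i} := by
    have : {ω : ℕ → ℕ | ω 0 = i} = (fun ω : ℕ → ℕ => ω 0) ⁻¹' {i} := rfl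
    rw [this]
    exact measurableSet_preimage (measurable_pi_apply 0) (measurableSet_singleton i)
  have h0 : μ i {ω : ℕ → ℕ | ω 0 = i} = 1 := by
    have h := hlaw i 0 (fun _ => i) rfl
    rw [Finset.range_zero, Finset.prod_empty, ENNReal.ofReal_one] at h
    have hset : {ω : ℕ → ℕ | ∀ k ≤ 0, ω k = (fun _ => i) k} = {ω : ℕ → ℕ | ω 0 = i} := by
      ext ω; simp [Nat.le_zero]
    rwa [hset] at h
  have hae0 : ∀ᵐ ω ∂ μ i, ω 0 = i := by
    rw [ae_iff]
    have hc : {ω : ℕ → ℕ | ¬ ω 0 = i} = {ω : ℕ → ℕ | ω 0 = i}ᶜ := rfl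
    rw [hc, measure_compl h0meas (measure_ne_top _ _), h0, measure_univ, tsub_self]
  have hjmeas : MeasurableSet {ω : ℕ → ℕ | ∃ k, 1 ≤ k ∧ ω k = j} := by
    have hset : {ω : ℕ → ℕ | ∃ k, 1 ≤ k ∧ ω k = j} =
        ⋃ k, {ω : ℕ → ℕ | 1 ≤ k ∧ ω k = j} := by
      ext ω; simp [Set.mem_iUnion]
    rw [hset]
    refine MeasurableSet.iUnion fun k => ?_
    by_cases hk : 1 ≤ k
    · have : {ω : ℕ → ℕ | 1 ≤ k ∧ ω k = j} = (fun ω : ℕ → ℕ => ω k) ⁻¹' {j} := by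
        ext ω; simp [hk]
      rw [this]
      exact measurableSet_preimage (measurable_pi_apply k) (measurableSet_singleton j)
    · have : {ω : ℕ → ℕ | 1 ≤ k ∧ ω k = j} = ∅ := by ext ω; simp [hk]
      rw [this]; exact MeasurableSet.empty
  have haej : ∀ᵐ ω ∂ μ i, ∃ k, 1 ≤ k ∧ ω k = j := by
    rw [ae_iff]
    have hc : {ω : ℕ → ℕ | ¬ ∃ k, 1 ≤ k ∧ ω k = j} = {ω : ℕ → ℕ | ∃ k, 1 ≤ k ∧ ω k = j}ᶜ := rfl
    rw [hc, measure_compl hjmeas (measure_ne_top _ _), hrec i j, measure_univ, tsub_self]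
  filter_upwards [hae0, haej] with ω h0ω hjω
  have hτmem : 1 ≤ hitTime j ω ∧ ω (hitTime j ω) = j := Nat.sInf_mem hjω
  refine ⟨?_, ?_, hjω⟩
  · intro n hn
    have hin : i ≤ n := le_trans (le_max_left _ _) hn
    have hjn : j ≤ n := le_trans (le_max_right _ _) hn
    rw [hitTime_censor_eq h0ω hin hjn hτmem.1 hτmem.2,
        hitTime_censor_eq h0ω (hin.trans n.le_succ) (hjn.trans n.le_succ) hτmem.1 hτmem.2]
    constructor
    · exact count_mono_pred (fun m hm => hm.trans n.le_succ) _
    · exact Nat.count_le _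
  · set τ := hitTime j ω with hτdef
    set N := max (max i j) ((Finset.range (τ + 1)).sup ω) with hNdef
    apply tendsto_atTop_of_eventually_const (i₀ := N)
    intro n hn
    have hin : i ≤ n := le_trans (le_trans (le_max_left _ _) (le_max_left _ _)) hn
    have hjn : j ≤ n := le_trans (le_trans (le_max_right _ _) (le_max_left _ _)) hn
    rw [hitTime_censor_eq h0ω hin hjn hτmem.1 hτmem.2]
    have hall : ∀ m < τ, ω m ≤ n := by
      intro m hm
      calc ω m ≤ (Finset.range (τ + 1)).sup ω :=
            Finset.le_sup (Finset.mem_range.mpr (by omega))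
      _ ≤ N := le_max_right _ _
      _ ≤ n := hn
    rw [Nat.count_eq_card_filter_range,
        Finset.filter_true_of_mem (fun m hm => hall m (Finset.mem_range.mp hm)),
        Finset.card_range]
end

section
/- For the censored Markov chain, the additive functionals are monotone and convergent along each sample path: almost surely _{(n)}ζ_j(|g|)(ω) ≤ _{(n+1)}ζ_j(|g|)(ω) ≤ ζ_j(|g|)(ω) and _{(n)}ζ_j(|g|)(ω) → ζ_j(|g|)(ω) as n → ∞. Hence Assumption 1 holds for censored truncations. -/
open MeasureTheory Filter Topology

private lemma censor_key (ω : ℕ → ℕ) (i j n : ℕ) (h0 : ω 0 = i)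
    (hret : ∃ k, 1 ≤ k ∧ ω k = j) (hn : max i j ≤ n) :
    hitTime j (censor n ω) = Nat.count (fun m => ω m ≤ n) (hitTime j ω) ∧
    ∀ G : ℕ → ℝ, addF G j (censor n ω)
      = ∑ m ∈ (Finset.range (hitTime j ω)).filter (fun m => ω m ≤ n), G (ω m) := by
  have hne : {k | 1 ≤ k ∧ ω k = j}.Nonempty := hret
  have hTmem := Nat.sInf_mem hne
  set T := hitTime j ω with hTdef
  have hT1 : 1 ≤ T := hTmem.1
  have hTj : ω T = j := hTmem.2
  have hmin : ∀ k, 1 ≤ k → ω k = j → T ≤ k := fun k hk hkj => Nat.sInf_le ⟨hk, hkj⟩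
  set p : ℕ → Prop := fun m => ω m ≤ n with hp
  have hp0 : p 0 := by simpa [hp, h0] using le_trans (le_max_left i j) hn
  have hpT : p T := by simpa [hp, hTj] using le_trans (le_max_right i j) hn
  set c := Nat.count p T with hc
  have hcard : ∀ hf : (setOf p).Finite, c < hf.toFinset.card :=
    fun hf => Nat.count_lt_card hf hpT
  have hnthc : Nat.nth p c = T := Nat.nth_count hpT
  have hc1 : 1 ≤ c := by
    have h1 : Nat.count p 1 = 1 := by simp [Nat.count_one, hp0]
    calc 1 = Nat.count p 1 := h1.symm
      _ ≤ Nat.count p T := Nat.count_monotone p hT1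
  have hknej : ∀ k, 1 ≤ k → k < c → ω (Nat.nth p k) ≠ j := by
    intro k hk1 hkc hne'
    have hlt : Nat.nth p k < T := Nat.nth_lt_of_lt_count hkc
    have hpos : 1 ≤ Nat.nth p k := by
      have h0' : Nat.nth p 0 = 0 := Nat.nth_zero_of_zero hp0
      have := Nat.nth_lt_nth' hk1 (fun hf => lt_trans hkc (hcard hf))
      omega
    exact absurd (hmin _ hpos hne') (not_le.mpr hlt)
  have hcens : ∀ k, censor n ω k = ω (Nat.nth p k) := fun k => rfl
  have hhit : hitTime j (censor n ω) = c := by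
    have hmemS : c ∈ {k | 1 ≤ k ∧ censor n ω k = j} := ⟨hc1, by rw [hcens, hnthc]; exact hTj⟩
    have hle : hitTime j (censor n ω) ≤ c := Nat.sInf_le hmemS
    have hmem' := Nat.sInf_mem (⟨c, hmemS⟩ : {k | 1 ≤ k ∧ censor n ω k = j}.Nonempty)
    obtain ⟨h1', h2'⟩ := hmem'
    by_contra hne'
    have hlt : hitTime j (censor n ω) < c := lt_of_le_of_ne hle hne'
    exact hknej _ h1' hlt (by rw [← hcens]; exact h2')
  refine ⟨hhit, fun G => ?_⟩
  classical
  have himg : (Finset.range c).image (Nat.nth p) = (Finset.range T).filter p := by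
    ext m
    simp only [Finset.mem_image, Finset.mem_filter, Finset.mem_range]
    constructor
    · rintro ⟨k, hk, rfl⟩
      exact ⟨Nat.nth_lt_of_lt_count hk, Nat.nth_mem k (fun hf => lt_trans hk (hcard hf))⟩
    · rintro ⟨hmT, hpm⟩
      exact ⟨Nat.count p m, Nat.count_strict_mono hpm hmT, Nat.nth_count hpm⟩
  have hinj : ∀ x ∈ Finset.range c, ∀ y ∈ Finset.range c,
      Nat.nth p x = Nat.nth p y → x = y := by
    intro x hx y hy hxy
    rw [Finset.mem_range] at hx hy
    have h1 := Nat.count_nth (p := p) (fun hf => lt_trans hx (hcard hf))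
    have h2 := Nat.count_nth (p := p) (fun hf => lt_trans hy (hcard hf))
    rw [← h1, ← h2, hxy]
  calc addF G j (censor n ω) = ∑ k ∈ Finset.range c, G (ω (Nat.nth p k)) := by
        rw [addF, hhit]; exact Finset.sum_congr rfl fun k _ => rfl
      _ = ∑ m ∈ (Finset.range c).image (Nat.nth p), G (ω m) := by
        rw [Finset.sum_image hinj]
      _ = ∑ m ∈ (Finset.range T).filter p, G (ω m) := by rw [himg]

private lemma censor_det (ω : ℕ → ℕ) (g : ℕ → ℝ) (i j : ℕ) (h0 : ω 0 = i)
    (hret : ∃ k, 1 ≤ k ∧ ω k = j) :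
    ((∀ n, max i j ≤ n →
        addF (fun x => |g x|) j (censor n ω) ≤ addF (fun x => |g x|) j (censor (n + 1) ω) ∧
        addF (fun x => |g x|) j (censor (n + 1) ω) ≤ addF (fun x => |g x|) j ω) ∧
      Tendsto (fun n => addF (fun x => |g x|) j (censor n ω)) atTop
        (𝓝 (addF (fun x => |g x|) j ω))) ∧
      ((∀ n, max i j ≤ n →
        hitTime j (censor n ω) ≤ hitTime j (censor (n + 1) ω) ∧
        hitTime j (censor (n + 1) ω) ≤ hitTime j ω) ∧
      Tendsto (fun n => hitTime j (censor n ω)) atTop (𝓝 (hitTime j ω))) := by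
  classical
  set T := hitTime j ω with hTdef
  set N := max (max i j) ((Finset.range T).sup ω) with hN
  have habs : ∀ m : ℕ, (0:ℝ) ≤ |g m| := fun m => abs_nonneg _
  -- eventual equality for n ≥ N
  have hfilt : ∀ n, N ≤ n →
      (Finset.range T).filter (fun m => ω m ≤ n) = Finset.range T := by
    intro n hn
    apply Finset.filter_true_of_mem
    intro m hm
    exact le_trans (le_trans (Finset.le_sup hm) (le_max_right _ _)) hn
  have key : ∀ n, max i j ≤ n →
      hitTime j (censor n ω) = Nat.count (fun m => ω m ≤ n) T ∧
      addF (fun x => |g x|) j (censor n ω)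
        = ∑ m ∈ (Finset.range T).filter (fun m => ω m ≤ n), |g (ω m)| := by
    intro n hn
    obtain ⟨h1, h2⟩ := censor_key ω i j n h0 hret hn
    exact ⟨h1, h2 _⟩
  have haddω : addF (fun x => |g x|) j ω = ∑ m ∈ Finset.range T, |g (ω m)| := rfl
  constructor
  · constructor
    · intro n hn
      have hn' : max i j ≤ n + 1 := le_trans hn (Nat.le_succ n)
      rw [(key n hn).2, (key (n+1) hn').2, haddω]
      constructor
      · apply Finset.sum_le_sum_of_subset_of_nonneg
        · exact Finset.monotone_filter_right _ (fun m _ h => le_trans h (Nat.le_succ n))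
        · intro m _ _; exact habs _
      · apply Finset.sum_le_sum_of_subset_of_nonneg (Finset.filter_subset _ _)
        intro m _ _; exact habs _
    · apply Filter.Tendsto.congr'
        (f₁ := fun _ : ℕ => addF (fun x => |g x|) j ω) ?_ tendsto_const_nhds
      filter_upwards [eventually_ge_atTop N] with n hn
      have hn' : max i j ≤ n := le_trans (le_max_left _ _) hn
      rw [(key n hn').2, hfilt n hn, haddω]
  · constructor
    · intro n hn
      have hn' : max i j ≤ n + 1 := le_trans hn (Nat.le_succ n)
      rw [(key n hn).1, (key (n+1) hn').1]
      exact ⟨Nat.count_mono_left (fun k _ h => le_trans h (Nat.le_succ n)), Nat.count_le _⟩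
    · apply Filter.Tendsto.congr' (f₁ := fun _ : ℕ => T) ?_ tendsto_const_nhds
      filter_upwards [eventually_ge_atTop N] with n hn
      have hn' : max i j ≤ n := le_trans (le_max_left _ _) hn
      rw [(key n hn').1]
      refine (Nat.count_iff_forall.mpr ?_).symm
      intro m hm
      exact le_trans (le_trans (Finset.le_sup (Finset.mem_range.mpr hm)) (le_max_right _ _)) hn

/-- For the censored chain of an irreducible recurrent DTMC, the
additive functionals of `|g|` are monotone and convergent along almost every sample path:
`_{(n)}ζ_j(|g|)(ω) ≤ _{(n+1)}ζ_j(|g|)(ω) ≤ ζ_j(|g|)(ω)` and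
`_{(n)}ζ_j(|g|)(ω) → ζ_j(|g|)(ω)`; together with the monotone convergence of the first
return times this says Assumption 1 holds for censored truncations. -/
theorem censored_additive_functionals_monotone
    (P : ℕ → ℕ → ℝ) (μ : ℕ → Measure (ℕ → ℕ)) (g : ℕ → ℝ) (j : ℕ)
    (hP : MCStochastic P) (hirr : MCIrreducible P) (hchain : MCChainLaw P μ)
    (hrec : ∀ i j', μ i {ω | ∃ k, 1 ≤ k ∧ ω k = j'} = 1) :
    ∀ i, ∀ᵐ ω ∂ μ i,
      ((∀ n, max i j ≤ n →
        addF (fun x => |g x|) j (censor n ω) ≤ addF (fun x => |g x|) j (censor (n + 1) ω) ∧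
        addF (fun x => |g x|) j (censor (n + 1) ω) ≤ addF (fun x => |g x|) j ω) ∧
      Tendsto (fun n => addF (fun x => |g x|) j (censor n ω)) atTop
        (𝓝 (addF (fun x => |g x|) j ω))) ∧
      ((∀ n, max i j ≤ n →
        hitTime j (censor n ω) ≤ hitTime j (censor (n + 1) ω) ∧
        hitTime j (censor (n + 1) ω) ≤ hitTime j ω) ∧
      Tendsto (fun n => hitTime j (censor n ω)) atTop (𝓝 (hitTime j ω))) := by
  intro i
  haveI : IsProbabilityMeasure (μ i) := hchain.1 i
  -- a.s. ω 0 = i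
  have hE1meas : MeasurableSet {ω : ℕ → ℕ | ω 0 = i} := by
    have : {ω : ℕ → ℕ | ω 0 = i} = (fun ω : ℕ → ℕ => ω 0) ⁻¹' {i} := rfl
    rw [this]
    exact (measurable_pi_apply 0) (measurableSet_singleton i)
  have hE1 : μ i {ω : ℕ → ℕ | ω 0 = i} = 1 := by
    have h := hchain.2 i 0 (fun _ => i) rfl
    have hs : {ω : ℕ → ℕ | ∀ k ≤ 0, ω k = (fun _ => i) k} = {ω : ℕ → ℕ | ω 0 = i} := by
      ext ω; simp [Nat.le_zero]
    rw [hs] at h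
    simpa using h
  have h1 : ∀ᵐ ω ∂ μ i, ω 0 = i := by
    rw [ae_iff]
    have : {ω : ℕ → ℕ | ¬ ω 0 = i} = {ω : ℕ → ℕ | ω 0 = i}ᶜ := rfl
    rw [this, prob_compl_eq_zero_iff hE1meas]
    exact hE1
  -- a.s. return to j
  have hE2meas : MeasurableSet {ω : ℕ → ℕ | ∃ k, 1 ≤ k ∧ ω k = j} := by
    have : {ω : ℕ → ℕ | ∃ k, 1 ≤ k ∧ ω k = j}
        = ⋃ k, ⋃ _ : 1 ≤ k, (fun ω : ℕ → ℕ => ω k) ⁻¹' {j} := by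
      ext ω; simp [Set.mem_iUnion]
    rw [this]
    exact MeasurableSet.iUnion fun k => MeasurableSet.iUnion fun _ =>
      (measurable_pi_apply k) (measurableSet_singleton j)
  have h2 : ∀ᵐ ω ∂ μ i, ∃ k, 1 ≤ k ∧ ω k = j := by
    rw [ae_iff]
    have : {ω : ℕ → ℕ | ¬ ∃ k, 1 ≤ k ∧ ω k = j} = {ω : ℕ → ℕ | ∃ k, 1 ≤ k ∧ ω k = j}ᶜ := rfl
    rw [this, prob_compl_eq_zero_iff hE2meas]
    exact hrec i j
  filter_upwards [h1, h2] with ω h0 hret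
  exact censor_det ω g i j h0 hret
end

section
/- Consider the DTMC on ℤ≥0 with p_{i,i+1} = p_i ∈ (0,1), p_{i,0} = q_i = 1 − p_i and all other entries zero. If π^T|g| < ∞, then for the fixed state 0 the unique solution of Poisson's equation is f_0(0) = 0 and f_0(i) = (π^T g) Σ_{m=0}^{i−1} 1/∏_{k=m}^{i−1} p_k − Σ_{m=0}^{i−1} g(m)/∏_{k=m}^{i−1} p_k for i ≥ 1. -/
open Filter Topology

/-- The transition matrix with `p_{i,0} = q_i = 1 - p_i`, `p_{i,i+1} = p_i` and all other
entries zero. -/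
noncomputable def birthResetP (p : ℕ → ℝ) : ℕ → ℕ → ℝ := fun i k =>
  if k = 0 then 1 - p i else if k = i + 1 then p i else 0

/-- `a_0 = 1`, `a_i = ∏_{k=0}^{i} p_k` for `i ≥ 1`. -/
noncomputable def aSeq (p : ℕ → ℝ) : ℕ → ℝ := fun i =>
  if i = 0 then 1 else ∏ k ∈ Finset.range (i + 1), p k

/-- The invariant probability vector `π(i) = a_i / ∑_k a_k`. -/
noncomputable def piVec (p : ℕ → ℝ) : ℕ → ℝ := fun i => aSeq p i / ∑' k, aSeq p k

/-- For the DTMC with `p_{i,i+1} = p_i ∈ (0,1)`, `p_{i,0} = 1 - p_i`,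
if `π^T|g| < ∞` then the unique solution of Poisson's equation `(P - I)f = -(g - (π^T g)e)`
normalized by `f(0) = 0` is given by
`f(i) = (π^T g) ∑_{m=0}^{i-1} 1/∏_{k=m}^{i-1} p_k - ∑_{m=0}^{i-1} g(m)/∏_{k=m}^{i-1} p_k`. -/
theorem reset_chain_poisson_solution
    (p g : ℕ → ℝ)
    (hp : ∀ i, 0 < p i ∧ p i < 1)
    (ha : Summable (aSeq p))
    (hg : Summable fun i => piVec p i * |g i|) :
    ∀ f : ℕ → ℝ,
      ((∀ i, (∑' k, birthResetP p i k * f k) - f i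
          = -(g i - ∑' m, piVec p m * g m)) ∧ f 0 = 0)
      ↔ (f 0 = 0 ∧ ∀ i, 1 ≤ i →
          f i = (∑' m, piVec p m * g m)
              * (∑ m ∈ Finset.range i, (∏ k ∈ Finset.Ico m i, p k)⁻¹)
            - ∑ m ∈ Finset.range i, g m / ∏ k ∈ Finset.Ico m i, p k) := by
  intro f
  have hp0 : ∀ i, p i ≠ 0 := fun i => (hp i).1.ne'
  set G := ∑' m, piVec p m * g m with hG
  set F : ℕ → ℝ := fun i =>
    G * (∑ m ∈ Finset.range i, (∏ k ∈ Finset.Ico m i, p k)⁻¹)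
      - ∑ m ∈ Finset.range i, g m / ∏ k ∈ Finset.Ico m i, p k with hF
  have hF0 : F 0 = 0 := by simp [hF]
  have hprod : ∀ i m : ℕ, m ≤ i →
      ∏ k ∈ Finset.Ico m (i + 1), p k = (∏ k ∈ Finset.Ico m i, p k) * p i := by
    intro i m hmi
    exact Finset.prod_Ico_succ_top hmi p
  have hrec : ∀ i, p i * F (i + 1) = F i + G - g i := by
    intro i
    have h1 : p i * ∑ m ∈ Finset.range (i + 1), (∏ k ∈ Finset.Ico m (i + 1), p k)⁻¹
        = (∑ m ∈ Finset.range i, (∏ k ∈ Finset.Ico m i, p k)⁻¹) + 1 := by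
      rw [Finset.mul_sum, Finset.sum_range_succ]
      congr 1
      · apply Finset.sum_congr rfl
        intro m hm
        rw [hprod i m (le_of_lt (Finset.mem_range.mp hm)),
          mul_inv, mul_comm ((∏ k ∈ Finset.Ico m i, p k)⁻¹) ((p i)⁻¹), ← mul_assoc,
          mul_inv_cancel₀ (hp0 i), one_mul]
      · rw [hprod i i le_rfl, Finset.Ico_self, Finset.prod_empty, one_mul,
          mul_inv_cancel₀ (hp0 i)]
    have h2 : p i * ∑ m ∈ Finset.range (i + 1), g m / ∏ k ∈ Finset.Ico m (i + 1), p k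
        = (∑ m ∈ Finset.range i, g m / ∏ k ∈ Finset.Ico m i, p k) + g i := by
      rw [Finset.mul_sum, Finset.sum_range_succ]
      congr 1
      · apply Finset.sum_congr rfl
        intro m hm
        rw [hprod i m (le_of_lt (Finset.mem_range.mp hm)), ← div_div, mul_comm,
          div_mul_cancel₀ _ (hp0 i)]
      · rw [hprod i i le_rfl, Finset.Ico_self, Finset.prod_empty, one_mul, mul_div_assoc']
        exact mul_div_cancel_left₀ (g i) (hp0 i)
    simp only [hF]
    rw [mul_sub, ← mul_assoc, mul_comm (p i) G, mul_assoc, h1, h2]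
    ring
  have hts : f 0 = 0 → ∀ i, ∑' k, birthResetP p i k * f k = p i * f (i + 1) := by
    intro h0 i
    rw [tsum_eq_single (i + 1)]
    · simp [birthResetP]
    · intro b hb
      rcases eq_or_ne b 0 with rfl | hb0
      · simp [birthResetP, h0]
      · simp [birthResetP, hb0, hb]
  constructor
  · rintro ⟨heq, h0⟩
    refine ⟨h0, ?_⟩
    have hall : ∀ i, f i = F i := by
      intro i
      induction i with
      | zero => rw [h0, hF0]
      | succ n ih =>
        have h := heq n
        rw [hts h0 n] at h
        have : p n * f (n + 1) = p n * F (n + 1) := by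
          rw [hrec n, ← ih]; linarith
        exact mul_left_cancel₀ (hp0 n) this
    intro i _
    exact hall i
  · rintro ⟨h0, hcl⟩
    have hall : ∀ i, f i = F i := by
      intro i
      rcases Nat.eq_zero_or_pos i with rfl | hi
      · rw [h0, hF0]
      · exact hcl i hi
    refine ⟨?_, h0⟩
    intro i
    rw [hts h0 i, hall i, hall (i + 1)]
    have := hrec i
    linarith
end

section
/- In the illustrative example with p_i = 1/2 for i = 0 or i odd, and p_i = 1 − 3^{−i/2} for even i ≥ 2, let _{(n)}P̃ be the last-column augmentation. With g(i) = i, the sequence _{(n)}π^T _{(n)}g converges to π^T g along odd n but diverges to +∞ along even n; hence _{(n)}f_0 does not converge to f_0. Thus an arbitrarily chosen augmented truncation need not converge to the solution of Poisson's equation. -/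
open Filter Topology

/-- `p_i = 1/2` if `i = 0` or `i` is odd, and `p_i = 1 - 3^{-i/2}` if `i ≥ 2` is even. -/
noncomputable def pEx : ℕ → ℝ := fun i =>
  if i = 0 ∨ Odd i then 1 / 2 else 1 - 1 / 3 ^ (i / 2)

/-- `a_0 = 1`, `a_i = ∏_{k=0}^{i} p_k`. -/
noncomputable def aEx : ℕ → ℝ := fun i =>
  if i = 0 then 1 else ∏ k ∈ Finset.range (i + 1), pEx k

/-- `π^T g` for the original chain (`π(i) = a_i / ∑ a_k`), with `g(i) = i`. -/
noncomputable def sEx : ℝ := (∑' i, aEx i * i) / ∑' i, aEx i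

/-- Stationary mean `_{(n)}π^T _{(n)}g` of the last-column augmented truncation, with
`g(i) = i` : `_{(n)}π(i) = a_i _{(n)}π(0)` for `i < n`, `_{(n)}π(n) = (a_n/q_n) _{(n)}π(0)`. -/
noncomputable def sTrunc (n : ℕ) : ℝ :=
  (∑ i ∈ Finset.range n, aEx i * i + (aEx n / (1 - pEx n)) * n)
    / (∑ i ∈ Finset.range n, aEx i + aEx n / (1 - pEx n))

/-- Solution of Poisson's equation for the chain, `g(i) = i`, normalized at `0`. -/
noncomputable def fEx (i : ℕ) : ℝ :=
  sEx * (∑ m ∈ Finset.range i, (∏ k ∈ Finset.Ico m i, pEx k)⁻¹)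
    - ∑ m ∈ Finset.range i, (m : ℝ) / ∏ k ∈ Finset.Ico m i, pEx k

/-- Solution of Poisson's equation for the last-column augmented truncation. -/
noncomputable def fTrunc (n i : ℕ) : ℝ :=
  sTrunc n * (∑ m ∈ Finset.range i, (∏ k ∈ Finset.Ico m i, pEx k)⁻¹)
    - ∑ m ∈ Finset.range i, (m : ℝ) / ∏ k ∈ Finset.Ico m i, pEx k

lemma pEx_odd {i : ℕ} (h : Odd i) : pEx i = 1 / 2 := by simp [pEx, h]

lemma pEx_zero : pEx 0 = 1 / 2 := by simp [pEx]

lemma pEx_even {i : ℕ} (h : Even i) (h0 : i ≠ 0) : pEx i = 1 - 1 / 3 ^ (i / 2) := by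
  rw [pEx]
  rw [if_neg]
  push_neg
  exact ⟨h0, (Nat.not_odd_iff_even.mpr h)⟩

lemma pEx_pos (i : ℕ) : 0 < pEx i := by
  rcases Nat.even_or_odd i with h | h
  · rcases eq_or_ne i 0 with rfl | h0
    · rw [pEx_zero]; norm_num
    · obtain ⟨m, rfl⟩ := h
      have hm : 1 ≤ m := by omega
      rw [pEx_even ⟨m, rfl⟩ h0]
      have h2 : 1 ≤ (m + m) / 2 := by omega
      have : (1:ℝ) / 3 ^ ((m + m) / 2) ≤ 1 / 3 ^ 1 := by
        apply div_le_div_of_nonneg_left (by norm_num) (by positivity)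
        exact pow_le_pow_right₀ (by norm_num) h2
      norm_num at this ⊢
      linarith
  · rw [pEx_odd h]; norm_num

lemma pEx_le_one (i : ℕ) : pEx i ≤ 1 := by
  rcases Nat.even_or_odd i with h | h
  · rcases eq_or_ne i 0 with rfl | h0
    · rw [pEx_zero]; norm_num
    · rw [pEx_even h h0]
      have : (0:ℝ) < 1 / 3 ^ (i / 2) := by positivity
      linarith
  · rw [pEx_odd h]; norm_num

lemma aEx_pos (i : ℕ) : 0 < aEx i := by
  rw [aEx]
  split
  · norm_num
  · exact Finset.prod_pos fun k _ => pEx_pos k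

lemma aEx_succ {i : ℕ} (h : 1 ≤ i) : aEx (i + 1) = aEx i * pEx (i + 1) := by
  rw [aEx, aEx, if_neg (by omega), if_neg (by omega), Finset.prod_range_succ]

lemma aEx_step (i : ℕ) : aEx (i + 2) ≤ 1 / 2 * aEx i := by
  have hodd : pEx (i+1) * pEx (i+2) ≤ 1 / 2 := by
    rcases Nat.even_or_odd i with h | h
    · have : Odd (i+1) := Even.add_one h
      rw [pEx_odd this]
      nlinarith [pEx_pos (i+2), pEx_le_one (i+2)]
    · have : Odd (i+2) := by rcases h with ⟨m, rfl⟩; exact ⟨m+1, by ring⟩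
      rw [pEx_odd this]
      nlinarith [pEx_pos (i+1), pEx_le_one (i+1)]
  have hr : aEx (i+2) = (∏ k ∈ Finset.range (i+1), pEx k) * (pEx (i+1) * pEx (i+2)) := by
    rw [aEx, if_neg (by omega), Finset.prod_range_succ, Finset.prod_range_succ]
    ring
  have hprod : (∏ k ∈ Finset.range (i+1), pEx k) ≤ aEx i := by
    rw [aEx]
    split
    · next h0 =>
        subst h0
        simp [pEx_zero]; norm_num
    · exact le_refl _
  have hP : 0 ≤ ∏ k ∈ Finset.range (i+1), pEx k :=
    Finset.prod_nonneg fun k _ => (pEx_pos k).le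
  have hpp : 0 ≤ pEx (i+1) * pEx (i+2) := mul_nonneg (pEx_pos _).le (pEx_pos _).le
  nlinarith

lemma aEx_one : aEx 1 = 1 / 4 := by
  rw [aEx, if_neg (by omega)]
  rw [Finset.prod_range_succ, Finset.prod_range_one, pEx_zero, pEx_odd (by decide)]
  norm_num

lemma aEx_le_half_pow : ∀ i, aEx i ≤ (1/2:ℝ) ^ (i / 2) := by
  intro i
  induction i using Nat.strong_induction_on with
  | _ i ih =>
    match i with
    | 0 => simp [aEx]
    | 1 => rw [aEx_one]; norm_num
    | (i+2) =>
      calc aEx (i+2) ≤ 1/2 * aEx i := aEx_step i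
        _ ≤ 1/2 * (1/2:ℝ)^(i/2) := by
            have := ih i (by omega)
            nlinarith
        _ = (1/2:ℝ)^((i+2)/2) := by
            rw [show (i+2)/2 = i/2 + 1 by omega, pow_succ]
            ring

noncomputable def rAux : ℝ := Real.sqrt (1/2)

lemma rAux_pos : 0 < rAux := Real.sqrt_pos.mpr (by norm_num)

lemma rAux_lt_one : rAux < 1 := by
  rw [rAux, show (1:ℝ) = Real.sqrt 1 by simp]
  exact Real.sqrt_lt_sqrt (by norm_num) (by norm_num)

lemma rAux_sq : rAux ^ 2 = 1/2 := Real.sq_sqrt (by norm_num)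

lemma aEx_le_geom (i : ℕ) : aEx i ≤ rAux⁻¹ * rAux ^ i := by
  have h1 : aEx i ≤ (1/2:ℝ)^(i/2) := aEx_le_half_pow i
  have h2 : (1/2:ℝ)^(i/2) = rAux ^ (2 * (i/2)) := by
    rw [pow_mul, rAux_sq]
  have h3 : rAux ^ (2 * (i/2) + 1) ≤ rAux ^ i :=
    pow_le_pow_of_le_one rAux_pos.le rAux_lt_one.le (by omega)
  have h4 : rAux ^ (2 * (i/2)) ≤ rAux⁻¹ * rAux ^ i := by
    rw [le_inv_mul_iff₀ rAux_pos]
    calc rAux * rAux ^ (2 * (i/2)) = rAux ^ (2*(i/2)+1) := by ring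
      _ ≤ rAux ^ i := h3
  calc aEx i ≤ (1/2:ℝ)^(i/2) := h1
    _ = rAux ^ (2 * (i/2)) := h2
    _ ≤ rAux⁻¹ * rAux ^ i := h4

lemma summable_aEx : Summable aEx := by
  apply Summable.of_nonneg_of_le (fun i => (aEx_pos i).le) aEx_le_geom
  exact (summable_geometric_of_lt_one rAux_pos.le rAux_lt_one).mul_left _

lemma summable_aEx_mul : Summable (fun i => aEx i * i) := by
  have hg : Summable (fun i : ℕ => rAux⁻¹ * ((i:ℝ)^1 * rAux ^ i)) :=
    (summable_pow_mul_geometric_of_norm_lt_one (R := ℝ) 1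
      (by rw [Real.norm_eq_abs, abs_of_pos rAux_pos]; exact rAux_lt_one)).mul_left _
  refine hg.of_nonneg_of_le
    (fun i => mul_nonneg (aEx_pos i).le (Nat.cast_nonneg i)) (fun i => ?_)
  have h := aEx_le_geom i
  have hi : (0:ℝ) ≤ i := Nat.cast_nonneg i
  have ha : 0 < aEx i := aEx_pos i
  calc aEx i * i ≤ (rAux⁻¹ * rAux ^ i) * i := by nlinarith
    _ = rAux⁻¹ * ((i:ℝ)^1 * rAux ^ i) := by ring

lemma pEx_two_mul {k : ℕ} (hk : 1 ≤ k) : pEx (2*k) = 1 - 1/3^k := by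
  have h : (2*k)/2 = k := by omega
  rw [pEx_even ⟨k, (two_mul k)⟩ (by omega), h]

noncomputable def TAux : ℕ → ℝ := fun k => aEx (2*k) * 3^k

lemma TAux_pos (k : ℕ) : 0 < TAux k := mul_pos (aEx_pos _) (by positivity)

lemma TAux_succ {k : ℕ} (hk : 1 ≤ k) : TAux (k+1) = TAux k * ((3/2) * (1 - 1/3^(k+1))) := by
  rw [TAux, TAux, show 2*(k+1) = (2*k+1)+1 by ring]
  rw [aEx_succ (by omega), aEx_succ (by omega : 1 ≤ 2*k)]
  rw [pEx_odd ⟨k, rfl⟩]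
  rw [show (2*k+1)+1 = 2*(k+1) by ring, pEx_two_mul (by omega)]
  rw [pow_succ]
  ring

lemma TAux_one : TAux 1 = 1/2 := by
  rw [TAux, aEx, if_neg (by omega)]
  rw [Finset.prod_range_succ, Finset.prod_range_succ, Finset.prod_range_one]
  rw [pEx_zero, pEx_odd (by decide), show (2:ℕ) = 2*1 by rfl, pEx_two_mul le_rfl]
  norm_num

lemma TAux_ge (k : ℕ) : (1/8:ℝ) * (4/3)^k ≤ TAux k := by
  rcases Nat.eq_zero_or_pos k with rfl | hk
  · rw [TAux]; simp [aEx]; norm_num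
  · induction k with
    | zero => omega
    | succ n ih =>
      rcases Nat.eq_zero_or_pos n with rfl | hn
      · rw [TAux_one]; norm_num
      · have h1 := ih hn
        rw [TAux_succ hn]
        have h2 : (1:ℝ)/3^(n+1) ≤ 1/9 := by
          apply div_le_div_of_nonneg_left (by norm_num) (by norm_num)
          calc (9:ℝ) = 3^2 := by norm_num
            _ ≤ 3^(n+1) := pow_le_pow_right₀ (by norm_num) (by omega)
        have h3 : (4/3:ℝ) ≤ (3/2) * (1 - 1/3^(n+1)) := by linarith
        have h4 : (0:ℝ) < (1/8) * (4/3)^n := by positivity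
        calc (1/8:ℝ) * (4/3)^(n+1) = ((1/8) * (4/3)^n) * (4/3) := by ring
          _ ≤ TAux n * ((3/2) * (1 - 1/3^(n+1))) := by nlinarith [TAux_pos n]

lemma TAux_tendsto : Tendsto TAux atTop atTop :=
  tendsto_atTop_mono TAux_ge
    ((tendsto_pow_atTop_atTop_of_one_lt (by norm_num : (1:ℝ) < 4/3)).const_mul_atTop
      (by norm_num))

lemma sTrunc_two_mul {k : ℕ} (hk : 1 ≤ k) :
    sTrunc (2*k) = (∑ i ∈ Finset.range (2*k), aEx i * i + TAux k * ((2*k : ℕ) : ℝ))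
      / (∑ i ∈ Finset.range (2*k), aEx i + TAux k) := by
  have h1 : 1 - pEx (2*k) = 1/3^k := by rw [pEx_two_mul hk]; ring
  have h2 : aEx (2*k) / ((1:ℝ)/3^k) = TAux k := by
    rw [TAux]; field_simp
  rw [sTrunc, h1, h2]

lemma tendsto_sTrunc_even : Tendsto (fun k => sTrunc (2*k)) atTop atTop := by
  have hA := summable_aEx
  set A := ∑' i, aEx i with hAdef
  have hev : ∀ᶠ k : ℕ in atTop, (k:ℝ) ≤ sTrunc (2*k) := by
    filter_upwards [TAux_tendsto.eventually_ge_atTop A, eventually_ge_atTop 1]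
      with k hk1 hk2
    rw [sTrunc_two_mul hk2]
    have hS1 : 0 ≤ ∑ i ∈ Finset.range (2*k), aEx i * i :=
      Finset.sum_nonneg fun i _ => mul_nonneg (aEx_pos i).le (Nat.cast_nonneg i)
    have hS2 : ∑ i ∈ Finset.range (2*k), aEx i ≤ A :=
      Summable.sum_le_tsum _ (fun i _ => (aEx_pos i).le) hA
    have hS2' : 0 ≤ ∑ i ∈ Finset.range (2*k), aEx i :=
      Finset.sum_nonneg fun i _ => (aEx_pos i).le
    have hT := TAux_pos k
    have hden : 0 < ∑ i ∈ Finset.range (2*k), aEx i + TAux k := by linarith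
    rw [le_div_iff₀ hden]
    have hk0 : (0:ℝ) ≤ k := Nat.cast_nonneg k
    have hST : ∑ i ∈ Finset.range (2*k), aEx i ≤ TAux k := le_trans hS2 hk1
    push_cast
    nlinarith [mul_le_mul_of_nonneg_left hST hk0]
  exact tendsto_atTop_mono' atTop hev tendsto_natCast_atTop_atTop

lemma tsum_aEx_pos : 0 < ∑' i, aEx i := by
  have h := Summable.le_tsum summable_aEx 0 (fun i _ => (aEx_pos i).le)
  have h0 : aEx 0 = 1 := by simp [aEx]
  linarith [h0 ▸ h]

lemma tendsto_sTrunc_odd : Tendsto (fun k => sTrunc (2*k+1)) atTop (𝓝 sEx) := by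
  have hA := summable_aEx
  have hM := summable_aEx_mul
  have hodd : Tendsto (fun k : ℕ => 2*k+1) atTop atTop :=
    tendsto_atTop_atTop.mpr fun b => ⟨b, fun a ha => by omega⟩
  have h1 : Tendsto (fun k : ℕ => ∑ i ∈ Finset.range (2*k+1), aEx i * i) atTop
      (𝓝 (∑' i, aEx i * i)) := (hM.hasSum.tendsto_sum_nat).comp hodd
  have h2 : Tendsto (fun k : ℕ => ∑ i ∈ Finset.range (2*k+1), aEx i) atTop
      (𝓝 (∑' i, aEx i)) := (hA.hasSum.tendsto_sum_nat).comp hodd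
  have h3 : Tendsto (fun k : ℕ => aEx (2*k+1) * ((2*k+1 : ℕ) : ℝ)) atTop (𝓝 0) :=
    hM.tendsto_atTop_zero.comp hodd
  have h4 : Tendsto (fun k : ℕ => aEx (2*k+1)) atTop (𝓝 0) :=
    hA.tendsto_atTop_zero.comp hodd
  have hnum := h1.add (h3.const_mul 2)
  have hden := h2.add (h4.const_mul 2)
  have hA0 : (∑' i, aEx i) + 2 * 0 ≠ 0 := by simpa using tsum_aEx_pos.ne'
  have hdiv := hnum.div hden hA0
  simp only [mul_zero, add_zero] at hdiv
  rw [show sEx = (∑' i, aEx i * i) / ∑' i, aEx i from rfl]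
  apply hdiv.congr
  intro k
  rw [Pi.div_apply, sTrunc, pEx_odd ⟨k, rfl⟩,
    show (1:ℝ) - 1/2 = 1/2 by norm_num,
    show aEx (2*k+1) / (1/2) = 2 * aEx (2*k+1) by ring,
    mul_assoc]

lemma not_tendsto_sTrunc : ¬ Tendsto sTrunc atTop (𝓝 sEx) := by
  intro h
  have htwo : Tendsto (fun k : ℕ => 2*k) atTop atTop :=
    tendsto_atTop_atTop.mpr fun b => ⟨b, fun a ha => by omega⟩
  exact not_tendsto_nhds_of_tendsto_atTop tendsto_sTrunc_even sEx (h.comp htwo)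

lemma fTrunc_one (n : ℕ) : fTrunc n 1 = 2 * sTrunc n := by
  rw [fTrunc]
  rw [Finset.sum_range_one, Finset.sum_range_one]
  rw [show Finset.Ico 0 1 = {0} from rfl, Finset.prod_singleton, pEx_zero]
  norm_num
  ring

lemma fEx_one : fEx 1 = 2 * sEx := by
  rw [fEx]
  rw [Finset.sum_range_one, Finset.sum_range_one]
  rw [show Finset.Ico 0 1 = {0} from rfl, Finset.prod_singleton, pEx_zero]
  norm_num
  ring

/-- In the illustrative example with `g(i) = i` the stationary means of
the last-column augmentations converge to `π^T g` along odd `n` but diverge to `+∞` along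
even `n`; hence `_{(n)}π^T _{(n)}g ↛ π^T g` and `_{(n)}f_0 ↛ f_0` : an arbitrarily chosen
augmented truncation need not converge to the solution of Poisson's equation. -/
theorem last_column_augmentation_need_not_converge :
    Summable (fun i => aEx i * i) ∧
    Tendsto (fun k => sTrunc (2 * k + 1)) atTop (𝓝 sEx) ∧
    Tendsto (fun k => sTrunc (2 * k)) atTop atTop ∧
    ¬ Tendsto sTrunc atTop (𝓝 sEx) ∧
    ∃ i, ¬ Tendsto (fun n => fTrunc n i) atTop (𝓝 (fEx i)) := by
  refine ⟨summable_aEx_mul, tendsto_sTrunc_odd, tendsto_sTrunc_even, not_tendsto_sTrunc,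
    1, fun h => not_tendsto_sTrunc ?_⟩
  have h' : Tendsto (fun n => 2 * sTrunc n) atTop (𝓝 (2 * sEx)) := by
    rw [← fEx_one]
    exact h.congr fun n => fTrunc_one n
  have h'' := h'.const_mul (1/2 : ℝ)
  have : (1/2 : ℝ) * (2 * sEx) = sEx := by ring
  rw [this] at h''
  exact h''.congr fun n => by ring
end
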